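/- Let 0 < a ≤ 1/2, Ω = {0,1}^ℕ with Bernoulli product measure ν_a, and g the dyadic odometer. Then the Radon–Nikodym derivative of g^{-1}_*(ν_a) with respect to ν_a is essentially bounded, with ‖dg^{-1}(ν_a)/dν_a‖_∞ ≤ (1-a)/a. -/

import Mathlib

open MeasureTheory Filter Topology ENNReal

/-- The dyadic odometer ("addition of `(1,0,0,...)` with carry to the right") on `{0,1}^ℕ`:
it flips the `n`-th bit exactly when all earlier bits equal `1`. -/
def odometer (x : ℕ → Bool) : ℕ → Bool :=
  fun n => if ∀ k < n, x k = true then !(x n) else x n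

/-- The inverse of the dyadic odometer ("subtraction of `1` with borrow"). -/
def odometerInv (x : ℕ → Bool) : ℕ → Bool :=
  fun n => if ∀ k < n, x k = false then !(x n) else x n

/-- `ν` is the Bernoulli product measure `⊗_{n} (a δ_0 + (1-a) δ_1)` on `{0,1}^ℕ`
(identifying `0` with `false` and `1` with `true`): it is a probability measure giving each
cylinder set determined by the first `n` coordinates its product measure. -/
def IsBernoulliProd (a : ℝ) (ν : Measure (ℕ → Bool)) : Prop :=
  IsProbabilityMeasure ν ∧
    ∀ (n : ℕ) (s : Fin n → Bool),
      ν {x | ∀ i : Fin n, x i = s i} =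
        ∏ i : Fin n, ENNReal.ofReal (if s i then 1 - a else a)

/-- The total variation distance `‖μ - ν‖` of two (finite) measures. -/
noncomputable def tvDist {Ω : Type*} [MeasurableSpace Ω] (μ ν : Measure Ω) : ℝ≥0∞ :=
  (μ - ν) Set.univ + (ν - μ) Set.univ

namespace OdoAux

def cyl (n : ℕ) (s : ℕ → Bool) : Set (ℕ → Bool) := {x | ∀ i < n, x i = s i}

lemma measurableSet_cyl (n : ℕ) (s : ℕ → Bool) : MeasurableSet (cyl n s) := by
  have h : cyl n s = ⋂ i ∈ Finset.range n, {x : ℕ → Bool | x i = s i} := by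
    ext x; simp [cyl]
  rw [h]
  refine Finset.measurableSet_biInter _ fun i _ => ?_
  have h2 : {x : ℕ → Bool | x i = s i} = (fun x : ℕ → Bool => x i) ⁻¹' {s i} := rfl
  rw [h2]
  exact measurable_pi_apply i (measurableSet_singleton (s i))

lemma odometer_prefix {x y : ℕ → Bool} {n : ℕ} (h : ∀ i < n, x i = y i) :
    ∀ i < n, odometer x i = odometer y i := by
  intro i hi
  have hc : (∀ k < i, x k = true) ↔ (∀ k < i, y k = true) := by
    constructor <;> intro h' k hk
    · rw [← h k (hk.trans hi)]; exact h' k hk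
    · rw [h k (hk.trans hi)]; exact h' k hk
  unfold odometer
  by_cases hx : ∀ k < i, x k = true
  · rw [if_pos hx, if_pos (hc.mp hx), h i hi]
  · rw [if_neg hx, if_neg (fun hy => hx (hc.mpr hy)), h i hi]

lemma odometerInv_prefix {x y : ℕ → Bool} {n : ℕ} (h : ∀ i < n, x i = y i) :
    ∀ i < n, odometerInv x i = odometerInv y i := by
  intro i hi
  have hc : (∀ k < i, x k = false) ↔ (∀ k < i, y k = false) := by
    constructor <;> intro h' k hk
    · rw [← h k (hk.trans hi)]; exact h' k hk
    · rw [h k (hk.trans hi)]; exact h' k hk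
  unfold odometerInv
  by_cases hx : ∀ k < i, x k = false
  · rw [if_pos hx, if_pos (hc.mp hx), h i hi]
  · rw [if_neg hx, if_neg (fun hy => hx (hc.mpr hy)), h i hi]

lemma odometer_leading (x : ℕ → Bool) (n : ℕ) :
    (∀ k < n, odometer x k = false) ↔ (∀ k < n, x k = true) := by
  induction n with
  | zero => simp
  | succ n ih =>
    constructor
    · intro h
      have h1 : ∀ k < n, x k = true := ih.mp fun k hk => h k (hk.trans (Nat.lt_succ_self n))
      intro k hk
      rcases Nat.lt_succ_iff_lt_or_eq.mp hk with hk' | rfl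
      · exact h1 k hk'
      · have h2 := h k (Nat.lt_succ_self k)
        unfold odometer at h2
        rw [if_pos h1] at h2
        simpa using h2
    · intro h k hk
      have h1 : ∀ j < k, x j = true := fun j hj => h j (hj.trans hk)
      unfold odometer
      rw [if_pos h1, h k hk]
      rfl

lemma odometerInv_leading (x : ℕ → Bool) (n : ℕ) :
    (∀ k < n, odometerInv x k = true) ↔ (∀ k < n, x k = false) := by
  induction n with
  | zero => simp
  | succ n ih =>
    constructor
    · intro h
      have h1 : ∀ k < n, x k = false := ih.mp fun k hk => h k (hk.trans (Nat.lt_succ_self n))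
      intro k hk
      rcases Nat.lt_succ_iff_lt_or_eq.mp hk with hk' | rfl
      · exact h1 k hk'
      · have h2 := h k (Nat.lt_succ_self k)
        unfold odometerInv at h2
        rw [if_pos h1] at h2
        simpa using h2
    · intro h k hk
      have h1 : ∀ j < k, x j = false := fun j hj => h j (hj.trans hk)
      unfold odometerInv
      rw [if_pos h1, h k hk]
      rfl

lemma odometer_odometerInv (x : ℕ → Bool) : odometer (odometerInv x) = x := by
  funext n
  unfold odometer
  by_cases h : ∀ k < n, odometerInv x k = true
  · rw [if_pos h]
    have hx : ∀ k < n, x k = false := (odometerInv_leading x n).mp h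
    show (!(odometerInv x n)) = x n
    unfold odometerInv
    rw [if_pos hx]
    simp
  · rw [if_neg h]
    have hx : ¬ ∀ k < n, x k = false := fun h' => h ((odometerInv_leading x n).mpr h')
    show odometerInv x n = x n
    unfold odometerInv
    rw [if_neg hx]

lemma odometerInv_odometer (x : ℕ → Bool) : odometerInv (odometer x) = x := by
  funext n
  unfold odometerInv
  by_cases h : ∀ k < n, odometer x k = false
  · rw [if_pos h]
    have hx : ∀ k < n, x k = true := (odometer_leading x n).mp h
    show (!(odometer x n)) = x n
    unfold odometer
    rw [if_pos hx]
    simp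
  · rw [if_neg h]
    have hx : ¬ ∀ k < n, x k = true := fun h' => h ((odometer_leading x n).mpr h')
    show odometer x n = x n
    unfold odometer
    rw [if_neg hx]

lemma preimage_cyl (n : ℕ) (s : ℕ → Bool) :
    odometerInv ⁻¹' cyl n s = cyl n (odometer s) := by
  ext x
  constructor
  · intro hx i hi
    have h1 : x i = odometer (odometerInv x) i := by rw [odometer_odometerInv]
    rw [h1]
    exact odometer_prefix (fun k hk => hx k hk) i hi
  · intro hx i hi
    set x' : ℕ → Bool := fun j => if j < n then x j else odometer s j with hx'def
    have hxx' : x' = odometer s := by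
      funext j
      by_cases hj : j < n
      · simp only [hx'def, if_pos hj]; exact hx j hj
      · simp only [hx'def, if_neg hj]
    have h1 : odometerInv x i = odometerInv x' i :=
      odometerInv_prefix (fun k hk => by simp only [hx'def, if_pos hk]) i hi
    rw [h1, hxx', odometerInv_odometer]

lemma measurable_odometerInv : Measurable odometerInv := by
  apply measurable_pi_lambda
  intro n
  have hset : MeasurableSet {x : ℕ → Bool | ∀ k < n, x k = false} :=
    measurableSet_cyl n (fun _ => false)
  have h1 : Measurable fun x : ℕ → Bool => !(x n) :=
    (measurable_from_top (f := Bool.not)).comp (measurable_pi_apply n)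
  exact Measurable.ite hset h1 (measurable_pi_apply n)

def cylSets : Set (Set (ℕ → Bool)) := {S | ∃ n s, S = cyl n s}

lemma isPiSystem_cylSets : IsPiSystem cylSets := by
  rintro S ⟨n, s, rfl⟩ T ⟨m, t, rfl⟩ hne
  obtain ⟨x, hxs, hxt⟩ := hne
  rcases le_total n m with h | h
  · have he : cyl n s ∩ cyl m t = cyl m t := by
      apply Set.inter_eq_self_of_subset_right
      intro y hy i hi
      exact (hy i (hi.trans_le h)).trans ((hxt i (hi.trans_le h)).symm.trans (hxs i hi))
    rw [he]; exact ⟨m, t, rfl⟩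
  · have he : cyl n s ∩ cyl m t = cyl n s := by
      apply Set.inter_eq_self_of_subset_left
      intro y hy i hi
      exact (hy i (hi.trans_le h)).trans ((hxs i (hi.trans_le h)).symm.trans (hxt i hi))
    rw [he]; exact ⟨n, s, rfl⟩

lemma generateFrom_cylSets :
    (inferInstance : MeasurableSpace (ℕ → Bool)) = MeasurableSpace.generateFrom cylSets := by
  apply le_antisymm
  · have h : ∀ i : ℕ, @Measurable (ℕ → Bool) Bool (MeasurableSpace.generateFrom cylSets) _
        (fun x => x i) := by
      intro i
      apply @measurable_to_countable' Bool (ℕ → Bool) _ _ (MeasurableSpace.generateFrom cylSets)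
        (fun x => x i)
      intro b
      have heq : ((fun x : ℕ → Bool => x i) ⁻¹' {b}) =
          ⋃ (t : Fin (i+1) → Bool) (_ : t ⟨i, Nat.lt_succ_self i⟩ = b),
            cyl (i+1) (fun j => if h : j < i+1 then t ⟨j, h⟩ else false) := by
        ext x
        simp only [Set.mem_preimage, Set.mem_singleton_iff, Set.mem_iUnion]
        constructor
        · intro hx
          refine ⟨fun j => x j, hx, ?_⟩
          intro j hj
          simp [hj]
        · rintro ⟨t, htb, hxt⟩
          have h3 := hxt i (Nat.lt_succ_self i)
          simp only [dif_pos (Nat.lt_succ_self i)] at h3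
          rw [h3]; exact htb
      rw [heq]
      exact MeasurableSet.iUnion fun t => MeasurableSet.iUnion fun _ =>
        MeasurableSpace.measurableSet_generateFrom ⟨_, _, rfl⟩
    exact iSup_le fun i => measurable_iff_comap_le.mp (h i)
  · exact MeasurableSpace.generateFrom_le (by rintro S ⟨n, s, rfl⟩; exact measurableSet_cyl n s)

def A (j : ℕ) : Set (ℕ → Bool) := {x | (∀ k < j, x k = true) ∧ x j = false}

lemma A_eq_cyl (j : ℕ) : A j = cyl (j+1) (fun k => decide (k < j)) := by
  ext x
  constructor
  · rintro ⟨h1, h2⟩ k hk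
    rcases Nat.lt_succ_iff_lt_or_eq.mp hk with hk' | rfl
    · simp [hk', h1 k hk']
    · simpa using h2
  · intro h
    constructor
    · intro k hk
      have := h k (hk.trans (Nat.lt_succ_self j))
      simpa [hk] using this
    · have := h j (Nat.lt_succ_self j)
      simpa using this

lemma measurableSet_A (j : ℕ) : MeasurableSet (A j) := by
  rw [A_eq_cyl]; exact measurableSet_cyl _ _

noncomputable def fdens (a : ℝ) : (ℕ → Bool) → ℝ≥0∞ := fun x =>
  ∑' j : ℕ, (A j).indicator
    (fun _ => (ENNReal.ofReal (a / (1 - a))) ^ j * ENNReal.ofReal ((1 - a) / a)) x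

lemma measurable_fdens (a : ℝ) : Measurable (fdens a) :=
  Measurable.ennreal_tsum fun j => Measurable.indicator measurable_const (measurableSet_A j)

lemma fdens_le (a : ℝ) (ha0 : 0 < a) (ha : a ≤ 1/2) (x : ℕ → Bool) :
    fdens a x ≤ ENNReal.ofReal ((1 - a) / a) := by
  set r := ENNReal.ofReal (a / (1 - a)) with hrdef
  set c := ENNReal.ofReal ((1 - a) / a) with hcdef
  have hr : r ≤ 1 := by
    rw [hrdef, show (1 : ℝ≥0∞) = ENNReal.ofReal 1 from ENNReal.ofReal_one.symm]
    apply ENNReal.ofReal_le_ofReal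
    rw [div_le_one (by linarith)]
    linarith
  by_cases h : ∃ j, x ∈ A j
  · obtain ⟨j, hj⟩ := h
    have huniq : ∀ k, k ≠ j → (A k).indicator (fun _ => r ^ k * c) x = 0 := by
      intro k hk
      rw [Set.indicator_of_notMem]
      intro hxk
      rcases lt_or_gt_of_ne hk with h' | h'
      · have h2 := hxk.2
        rw [hj.1 k h'] at h2
        exact Bool.noConfusion h2
      · have h2 := hj.2
        rw [hxk.1 j h'] at h2
        exact Bool.noConfusion h2
    rw [fdens, tsum_eq_single j huniq, Set.indicator_of_mem hj]
    calc r ^ j * c ≤ 1 * c := mul_le_mul_left (pow_le_one' hr j) c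
      _ = c := one_mul c
  · push_neg at h
    have hz : ∀ j : ℕ, (A j).indicator (fun _ => r ^ j * c) x = 0 :=
      fun j => Set.indicator_of_notMem (h j) _
    simp [fdens, ← hrdef, ← hcdef, hz]

end OdoAux

open OdoAux

/-- The Radon–Nikodym derivative `d g^{-1}_*(ν_a) / d ν_a` is essentially bounded
by `(1-a)/a`. -/
theorem rnDeriv_odometerInv_pushforward_le (a : ℝ) (ha0 : 0 < a) (ha : a ≤ 1 / 2)
    (ν : Measure (ℕ → Bool)) (hν : IsBernoulliProd a ν) :
    ∀ᵐ x ∂ν, (Measure.map odometerInv ν).rnDeriv ν x ≤ ENNReal.ofReal ((1 - a) / a) := by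
  obtain ⟨hprob, hcylm⟩ := hν
  have h1a : (0:ℝ) < 1 - a := by linarith
  set r := ENNReal.ofReal (a / (1 - a)) with hrdef
  set c := ENNReal.ofReal ((1 - a) / a) with hcdef
  have hrc1 : r * ENNReal.ofReal (1 - a) = ENNReal.ofReal a := by
    rw [hrdef, ← ENNReal.ofReal_mul (by positivity)]
    congr 1
    field_simp
  have hca : c * ENNReal.ofReal a = ENNReal.ofReal (1 - a) := by
    rw [hcdef, ← ENNReal.ofReal_mul (by positivity)]
    congr 1
    field_simp
  -- measure of cylinders
  have hm : ∀ (n : ℕ) (s : ℕ → Bool),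
      ν (cyl n s) = ∏ i ∈ Finset.range n, ENNReal.ofReal (if s i then 1 - a else a) := by
    intro n s
    have h1 : cyl n s = {x | ∀ i : Fin n, x i = s i} := by
      ext x
      constructor
      · intro hx i; exact hx i i.isLt
      · intro hx i hi; exact hx ⟨i, hi⟩
    rw [h1, hcylm n (fun i : Fin n => s i)]
    exact Fin.prod_univ_eq_prod_range (fun i => ENNReal.ofReal (if s i then 1 - a else a)) n
  -- measure of A j
  have hAj : ∀ j : ℕ, ν (A j) = ENNReal.ofReal (1 - a) ^ j * ENNReal.ofReal a := by
    intro j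
    rw [A_eq_cyl, hm, Finset.prod_range_succ]
    have h2 : ∀ i ∈ Finset.range j,
        ENNReal.ofReal (if decide (i < j) then 1 - a else a) = ENNReal.ofReal (1 - a) := by
      intro i hi
      rw [Finset.mem_range] at hi
      simp [hi]
    rw [Finset.prod_congr rfl h2, Finset.prod_const, Finset.card_range]
    simp
  -- withDensity on cylinders
  have hwd : ∀ (n : ℕ) (s : ℕ → Bool),
      (ν.withDensity (fdens a)) (cyl n s) = ∑' j : ℕ, r ^ j * c * ν (A j ∩ cyl n s) := by
    intro n s
    rw [withDensity_apply _ (measurableSet_cyl n s)]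
    rw [show (fdens a) = fun x => ∑' j : ℕ, (A j).indicator (fun _ => r ^ j * c) x from rfl]
    rw [lintegral_tsum fun j =>
      (Measurable.indicator measurable_const (measurableSet_A j)).aemeasurable]
    congr 1
    funext j
    rw [lintegral_indicator (measurableSet_A j), setLIntegral_const,
      Measure.restrict_apply (measurableSet_A j)]
  -- map on cylinders
  have hmapcyl : ∀ (n : ℕ) (s : ℕ → Bool),
      (Measure.map odometerInv ν) (cyl n s) = ν (cyl n (odometer s)) := by
    intro n s
    rw [Measure.map_apply measurable_odometerInv (measurableSet_cyl n s), preimage_cyl]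
  -- key equality on cylinders
  have hkey : ∀ (n : ℕ) (s : ℕ → Bool),
      (Measure.map odometerInv ν) (cyl n s) = (ν.withDensity (fdens a)) (cyl n s) := by
    intro n s
    rw [hmapcyl, hwd, hm]
    by_cases hs : ∀ i < n, s i = true
    · -- all-true case
      have hO : ∀ i < n, odometer s i = false := by
        intro i hi
        unfold odometer
        rw [if_pos (fun k hk => hs k (hk.trans hi)), hs i hi]
        rfl
      have hleft : ∏ i ∈ Finset.range n, ENNReal.ofReal (if odometer s i then 1 - a else a)
          = ENNReal.ofReal a ^ n := by
        have h1 : ∀ i ∈ Finset.range n,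
            ENNReal.ofReal (if odometer s i then 1 - a else a) = ENNReal.ofReal a := by
          intro i hi
          rw [Finset.mem_range] at hi
          rw [hO i hi]
          simp
        rw [Finset.prod_congr rfl h1, Finset.prod_const, Finset.card_range]
      have hterm : ∀ j : ℕ, r ^ j * c * ν (A j ∩ cyl n s) =
          if j < n then 0 else ENNReal.ofReal a ^ j * ENNReal.ofReal (1 - a) := by
        intro j
        by_cases hj : j < n
        · have hempty : A j ∩ cyl n s = ∅ := by
            ext x
            simp only [Set.mem_inter_iff, Set.mem_empty_iff_false, iff_false, not_and]
            rintro ⟨h1, h2⟩ h3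
            have h4 := h3 j hj
            rw [hs j hj] at h4
            rw [h4] at h2
            exact Bool.noConfusion h2
          rw [if_pos hj, hempty]
          simp
        · push_neg at hj
          have hsub : A j ∩ cyl n s = A j :=
            Set.inter_eq_self_of_subset_left
              (fun x hx i hi => (hx.1 i (hi.trans_le hj)).trans (hs i hi).symm)
          rw [if_neg (not_lt.mpr hj), hsub, hAj j]
          calc r ^ j * c * (ENNReal.ofReal (1 - a) ^ j * ENNReal.ofReal a)
              = (r * ENNReal.ofReal (1 - a)) ^ j * (c * ENNReal.ofReal a) := by ring
            _ = ENNReal.ofReal a ^ j * ENNReal.ofReal (1 - a) := by rw [hrc1, hca]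
      rw [tsum_congr hterm, hleft]
      -- geometric sum
      have hshift := Summable.sum_add_tsum_nat_add'
        (f := fun j : ℕ => if j < n then 0 else ENNReal.ofReal a ^ j * ENNReal.ofReal (1 - a))
        (k := n) ENNReal.summable
      rw [← hshift]
      have hzero : ∑ j ∈ Finset.range n,
          (if j < n then 0 else ENNReal.ofReal a ^ j * ENNReal.ofReal (1 - a)) = 0 := by
        apply Finset.sum_eq_zero
        intro j hj
        rw [Finset.mem_range] at hj
        rw [if_pos hj]
      rw [hzero, zero_add]
      have htail : ∀ j : ℕ, (if j + n < n then 0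
          else ENNReal.ofReal a ^ (j + n) * ENNReal.ofReal (1 - a)) =
          ENNReal.ofReal a ^ n * (ENNReal.ofReal a ^ j * ENNReal.ofReal (1 - a)) := by
        intro j
        rw [if_neg (by omega), pow_add]
        ring
      rw [tsum_congr htail, ENNReal.tsum_mul_left, ENNReal.tsum_mul_right,
        ENNReal.tsum_geometric]
      have h1q : (1 : ℝ≥0∞) - ENNReal.ofReal a = ENNReal.ofReal (1 - a) := by
        rw [← ENNReal.ofReal_one, ← ENNReal.ofReal_sub _ ha0.le]
      rw [h1q, ENNReal.inv_mul_cancel (ENNReal.ofReal_pos.mpr h1a).ne' ENNReal.ofReal_ne_top, mul_one]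
    · -- there is a false coordinate before n
      push_neg at hs
      obtain ⟨i0, hi0n, hi0⟩ := hs
      have hex : ∃ i, s i = false := ⟨i0, by simpa using hi0⟩
      have hms : s (Nat.find hex) = false := Nat.find_spec hex
      set m := Nat.find hex with hmdef
      have hmlt : m < n := lt_of_le_of_lt (Nat.find_le (by simpa using hi0)) hi0n
      have hbefore : ∀ k < m, s k = true := by
        intro k hk
        have := Nat.find_min hex hk
        simpa using this
      have hterm : ∀ j : ℕ, j ≠ m → r ^ j * c * ν (A j ∩ cyl n s) = 0 := by
        intro j hj
        have hempty : A j ∩ cyl n s = ∅ := by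
          ext x
          simp only [Set.mem_inter_iff, Set.mem_empty_iff_false, iff_false, not_and]
          rintro ⟨h1, h2⟩ h3
          rcases lt_or_gt_of_ne hj with h' | h'
          · have h4 := h3 j (h'.trans hmlt)
            rw [hbefore j h'] at h4
            rw [h4] at h2
            exact Bool.noConfusion h2
          · have h4 := h1 m h'
            rw [h3 m hmlt, hms] at h4
            exact Bool.noConfusion h4
        rw [hempty]
        simp
      rw [tsum_eq_single m hterm]
      have hsub : cyl n s ⊆ A m := fun x hx =>
        ⟨fun k hk => (hx k (hk.trans hmlt)).trans (hbefore k hk), (hx m hmlt).trans hms⟩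
      rw [Set.inter_eq_self_of_subset_right hsub, hm]
      -- split the products at m+1
      have hsplit : ∀ t : ℕ → Bool,
          ∏ i ∈ Finset.range n, ENNReal.ofReal (if t i then 1 - a else a) =
          (∏ i ∈ Finset.range (m+1), ENNReal.ofReal (if t i then 1 - a else a)) *
            ∏ i ∈ Finset.Ico (m+1) n, ENNReal.ofReal (if t i then 1 - a else a) := by
        intro t
        rw [Finset.range_eq_Ico, ← Finset.prod_Ico_consecutive _ (Nat.zero_le (m+1)) hmlt,
          ← Finset.range_eq_Ico]
      have htail : ∀ i ∈ Finset.Ico (m+1) n,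
          ENNReal.ofReal (if odometer s i then 1 - a else a) =
          ENNReal.ofReal (if s i then 1 - a else a) := by
        intro i hi
        rw [Finset.mem_Ico] at hi
        have hni : ¬ ∀ k < i, s k = true := by
          intro h
          have := h m (lt_of_lt_of_le (Nat.lt_succ_self m) hi.1)
          rw [hms] at this
          exact Bool.noConfusion this
        unfold odometer
        rw [if_neg hni]
      have hOhead : ∀ i ≤ m, odometer s i = !(s i) := by
        intro i hi
        unfold odometer
        rw [if_pos (fun k hk => hbefore k (hk.trans_le hi))]
      have hheadO : ∏ i ∈ Finset.range (m+1), ENNReal.ofReal (if odometer s i then 1 - a else a)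
          = ENNReal.ofReal a ^ m * ENNReal.ofReal (1 - a) := by
        rw [Finset.prod_range_succ]
        have h1 : ∀ i ∈ Finset.range m,
            ENNReal.ofReal (if odometer s i then 1 - a else a) = ENNReal.ofReal a := by
          intro i hi
          rw [Finset.mem_range] at hi
          rw [hOhead i hi.le, hbefore i hi]
          simp
        rw [Finset.prod_congr rfl h1, Finset.prod_const, Finset.card_range,
          hOhead m le_rfl, hms]
        simp
      have hheads : ∏ i ∈ Finset.range (m+1), ENNReal.ofReal (if s i then 1 - a else a)
          = ENNReal.ofReal (1 - a) ^ m * ENNReal.ofReal a := by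
        rw [Finset.prod_range_succ]
        have h1 : ∀ i ∈ Finset.range m,
            ENNReal.ofReal (if s i then 1 - a else a) = ENNReal.ofReal (1 - a) := by
          intro i hi
          rw [Finset.mem_range] at hi
          rw [hbefore i hi]
          simp
        rw [Finset.prod_congr rfl h1, Finset.prod_const, Finset.card_range, hms]
        simp
      rw [hsplit (odometer s), hsplit s, Finset.prod_congr rfl htail, hheadO, hheads]
      calc ENNReal.ofReal a ^ m * ENNReal.ofReal (1 - a) *
            ∏ i ∈ Finset.Ico (m+1) n, ENNReal.ofReal (if s i then 1 - a else a)
          = (r * ENNReal.ofReal (1 - a)) ^ m * (c * ENNReal.ofReal a) *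
            ∏ i ∈ Finset.Ico (m+1) n, ENNReal.ofReal (if s i then 1 - a else a) := by
            rw [hrc1, hca]
        _ = r ^ m * c * (ENNReal.ofReal (1 - a) ^ m * ENNReal.ofReal a *
            ∏ i ∈ Finset.Ico (m+1) n, ENNReal.ofReal (if s i then 1 - a else a)) := by
            ring
  -- the two measures are equal
  have hfin : IsFiniteMeasure (Measure.map odometerInv ν) := by
    have := Measure.isProbabilityMeasure_map (μ := ν) measurable_odometerInv.aemeasurable
    infer_instance
  have hmeq : Measure.map odometerInv ν = ν.withDensity (fdens a) := by
    refine MeasureTheory.ext_of_generate_finite cylSets generateFrom_cylSets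
      isPiSystem_cylSets ?_ ?_
    · rintro S ⟨n, s, rfl⟩
      exact hkey n s
    · have hu : (Set.univ : Set (ℕ → Bool)) = cyl 0 (fun _ => false) := by
        ext x
        simp [cyl]
      rw [hu]
      exact hkey 0 _
  have hrn : (Measure.map odometerInv ν).rnDeriv ν =ᵐ[ν] fdens a := by
    rw [hmeq]
    exact Measure.rnDeriv_withDensity ν (measurable_fdens a)
  filter_upwards [hrn] with x hx
  rw [hx]
  exact fdens_le a ha0 ha x
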